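/- arXiv:1607.06705 — 2 statements merged into one kernel-verified Lean document; each statement's English description precedes it below -/
import Mathlib

section
/- Let R be an integral domain, ★ a star operation on R, and let J = (a₁, …, a_k) be a finitely generated nonzero fractional ideal contained in a nonzero fractional ideal I. Then J is a ★-reduction of I if and only if, for every positive integer n, the ideal (a₁^n, …, a_k^n) is a ★-reduction of I^n. -/
open scoped nonZeroDivisors

set_option linter.unusedSectionVars false

section Helpers

variable {R K : Type*} [CommRing R] [IsDomain R] [Field K] [Algebra R K] [IsFractionRing R K]

private theorem FI.mul_ne_zero' {A B : FractionalIdeal R⁰ K} (hA : A ≠ 0) (hB : B ≠ 0) :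
    A * B ≠ 0 := by
  rw [Ne, FractionalIdeal.eq_zero_iff] at hA hB ⊢
  push_neg at hA hB
  obtain ⟨x, hx, hx0⟩ := hA
  obtain ⟨y, hy, hy0⟩ := hB
  exact fun h => hy0 (by
    simpa [hx0] using mul_eq_zero.1 (h _ (FractionalIdeal.mul_mem_mul hx hy)))

private theorem FI.pow_ne_zero' {A : FractionalIdeal R⁰ K} (hA : A ≠ 0) (n : ℕ) : A ^ n ≠ 0 := by
  induction n with
  | zero => simpa using one_ne_zero' (FractionalIdeal R⁰ K)
  | succ n ih => rw [pow_succ]; exact FI.mul_ne_zero' ih hA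

private theorem FI.add_le_iff' {A B C : FractionalIdeal R⁰ K} : A + B ≤ C ↔ A ≤ C ∧ B ≤ C := by
  rw [← FractionalIdeal.sup_eq_add]; exact sup_le_iff

private theorem FI.le_add_left' (A B : FractionalIdeal R⁰ K) : A ≤ A + B := by
  rw [← FractionalIdeal.sup_eq_add]; exact le_sup_left

private theorem FI.le_add_right' (A B : FractionalIdeal R⁰ K) : B ≤ A + B := by
  rw [← FractionalIdeal.sup_eq_add]; exact le_sup_right

private theorem FI.mul_le_mul' {A B C D : FractionalIdeal R⁰ K} (h1 : A ≤ B) (h2 : C ≤ D) :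
    A * C ≤ B * D :=
  le_trans (mul_le_mul_right h2 A)
    (by rw [mul_comm A D, mul_comm B D]; exact mul_le_mul_right h1 D)

private theorem FI.pow_le_pow' {A B : FractionalIdeal R⁰ K} (h : A ≤ B) (e : ℕ) :
    A ^ e ≤ B ^ e := by
  induction e with
  | zero => simp
  | succ e ih => rw [pow_succ, pow_succ]; exact FI.mul_le_mul' ih h

private theorem FI.sum_le' {ι : Type*} (t : Finset ι) (f : ι → FractionalIdeal R⁰ K)
    {X : FractionalIdeal R⁰ K} (h : ∀ i ∈ t, f i ≤ X) : ∑ i ∈ t, f i ≤ X := by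
  classical
  induction t using Finset.induction with
  | empty => simpa using FractionalIdeal.zero_le X
  | insert _ _ hx ih =>
      rw [Finset.sum_insert hx]
      exact FI.add_le_iff'.2 ⟨h _ (Finset.mem_insert_self _ _),
        ih fun i hi => h i (Finset.mem_insert_of_mem hi)⟩

private theorem FI.le_sum' {ι : Type*} (t : Finset ι) (f : ι → FractionalIdeal R⁰ K)
    {j : ι} (hj : j ∈ t) : f j ≤ ∑ i ∈ t, f i := by
  classical
  induction t using Finset.induction with
  | empty => simp at hj
  | @insert x t' hx ih =>
      rw [Finset.sum_insert hx]
      rcases Finset.mem_insert.1 hj with rfl | hj'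
      · exact FI.le_add_left' _ _
      · exact le_trans (ih hj') (FI.le_add_right' _ _)

private theorem FI.natCast_le_one' (c : ℕ) : (c : FractionalIdeal R⁰ K) ≤ 1 := by
  induction c with
  | zero => simpa using FractionalIdeal.zero_le 1
  | succ c ih =>
      push_cast
      exact FI.add_le_iff'.2 ⟨ih, le_refl _⟩

end Helpers

/-- A star operation on a domain `R` with fraction field `K`: a map on (nonzero) fractional
ideals satisfying `(xR)^★ = xR`, `(xI)^★ = x I^★`, `I ⊆ I^★`, monotonicity, and idempotency. -/
structure StarOperation (R K : Type*) [CommRing R] [IsDomain R] [Field K] [Algebra R K]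
    [IsFractionRing R K] where
  star : FractionalIdeal R⁰ K → FractionalIdeal R⁰ K
  star_spanSingleton : ∀ x : K, x ≠ 0 →
    star (FractionalIdeal.spanSingleton R⁰ x) = FractionalIdeal.spanSingleton R⁰ x
  star_spanSingleton_mul : ∀ (x : K) (I : FractionalIdeal R⁰ K), x ≠ 0 → I ≠ 0 →
    star (FractionalIdeal.spanSingleton R⁰ x * I) = FractionalIdeal.spanSingleton R⁰ x * star I
  le_star : ∀ I : FractionalIdeal R⁰ K, I ≠ 0 → I ≤ star I
  star_mono : ∀ I J : FractionalIdeal R⁰ K, I ≠ 0 → I ≤ J → star I ≤ star J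
  star_star : ∀ I : FractionalIdeal R⁰ K, I ≠ 0 → star (star I) = star I

/-- `J` is a `★`-reduction of `I` if `(J · I^n)^★ = (I^(n+1))^★` for some integer `n ≥ 0`. -/
def IsStarReduction {R K : Type*} [CommRing R] [IsDomain R] [Field K] [Algebra R K]
    [IsFractionRing R K] (s : StarOperation R K) (J I : FractionalIdeal R⁰ K) : Prop :=
  ∃ n : ℕ, s.star (J * I ^ n) = s.star (I ^ (n + 1))

section StarLemmas

variable {R K : Type*} [CommRing R] [IsDomain R] [Field K] [Algebra R K] [IsFractionRing R K]

private theorem star_absorb (s : StarOperation R K) {A B : FractionalIdeal R⁰ K}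
    (hA : A ≠ 0) (hB : B ≠ 0) : s.star (s.star A * B) = s.star (A * B) := by
  have hAB : A * B ≠ 0 := FI.mul_ne_zero' hA hB
  have hABle : A * B ≤ s.star A * B := by
    rw [mul_comm A B, mul_comm (s.star A) B]
    exact mul_le_mul_right (s.le_star A hA) B
  have h0 : s.star A * B ≠ 0 := fun h => hAB (le_antisymm (h ▸ hABle) (FractionalIdeal.zero_le _))
  have hle : s.star A * B ≤ s.star (A * B) := by
    rw [FractionalIdeal.mul_le]
    intro x hx y hy
    rcases eq_or_ne y 0 with rfl | hy0
    · rw [mul_zero]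
      exact (s.star (A * B)).coeToSubmodule.zero_mem
    · have hyA : FractionalIdeal.spanSingleton R⁰ y * A ≠ 0 :=
        FI.mul_ne_zero' (FractionalIdeal.spanSingleton_ne_zero_iff.2 hy0) hA
      have h2 : FractionalIdeal.spanSingleton R⁰ y * A ≤ A * B := by
        rw [mul_comm A B]
        exact FI.mul_le_mul' (FractionalIdeal.spanSingleton_le_iff_mem.2 hy) le_rfl
      have h3 := s.star_mono _ _ hyA h2
      rw [s.star_spanSingleton_mul y A hy0 hA] at h3
      have hmem : y * x ∈ FractionalIdeal.spanSingleton R⁰ y * s.star A :=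
        FractionalIdeal.mul_mem_mul (FractionalIdeal.mem_spanSingleton_self R⁰ y) hx
      rw [mul_comm x y]
      exact h3 hmem
  refine le_antisymm ?_ (s.star_mono _ _ hAB hABle)
  calc s.star (s.star A * B) ≤ s.star (s.star (A * B)) := s.star_mono _ _ h0 hle
    _ = s.star (A * B) := s.star_star _ hAB

private theorem star_key (s : StarOperation R K) {J I : FractionalIdeal R⁰ K}
    (hJ0 : J ≠ 0) (hI0 : I ≠ 0) {m : ℕ} (hm : s.star (J * I ^ m) = s.star (I ^ (m + 1))) :
    ∀ t d : ℕ, s.star (J ^ (t + 1) * I ^ (m + d)) = s.star (I ^ (t + 1 + (m + d))) := by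
  have base : ∀ d : ℕ, s.star (J * I ^ (m + d)) = s.star (I ^ (m + d + 1))  := by
    intro d
    have h1 : J * I ^ (m + d) = (J * I ^ m) * I ^ d := by rw [pow_add]; ring
    rw [h1, ← star_absorb s (FI.mul_ne_zero' hJ0 (FI.pow_ne_zero' hI0 m))
        (FI.pow_ne_zero' hI0 d), hm,
      star_absorb s (FI.pow_ne_zero' hI0 (m + 1)) (FI.pow_ne_zero' hI0 d), ← pow_add]
    rw [show m + 1 + d = m + d + 1 from by omega]
  intro t
  induction t with
  | zero =>
      intro d
      rw [show 0 + 1 + (m + d) = m + d + 1 from by omega, pow_one]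
      exact base d
  | succ t ih =>
      intro d
      have e1 : J ^ (t + 1 + 1) * I ^ (m + d) = (J * I ^ (m + d)) * J ^ (t + 1) := by ring
      calc s.star (J ^ (t + 1 + 1) * I ^ (m + d))
          = s.star (s.star (J * I ^ (m + d)) * J ^ (t + 1)) := by
            rw [e1, star_absorb s (FI.mul_ne_zero' hJ0 (FI.pow_ne_zero' hI0 _))
              (FI.pow_ne_zero' hJ0 _)]
        _ = s.star (I ^ (m + d + 1) * J ^ (t + 1)) := by
            rw [base d, star_absorb s (FI.pow_ne_zero' hI0 _) (FI.pow_ne_zero' hJ0 _)]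
        _ = s.star (J ^ (t + 1) * I ^ (m + (d + 1))) := by
            rw [mul_comm, show m + (d + 1) = m + d + 1 from by omega]
        _ = s.star (I ^ (t + 1 + 1 + (m + d))) := by
            rw [ih (d + 1), show t + 1 + (m + (d + 1)) = t + 1 + 1 + (m + d) from by omega]

private theorem pow_le_pigeonhole {ι : Type*} (S : ι → FractionalIdeal R⁰ K) (n : ℕ)
    (t : Finset ι) : ∀ N : ℕ, t.card * (n - 1) < N →
    (∑ i ∈ t, S i) ^ N ≤ (∑ i ∈ t, S i ^ n) * (∑ i ∈ t, S i) ^ (N - n) := by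
  classical
  induction t using Finset.induction with
  | empty =>
      intro N hN
      simp only [Finset.card_empty, Nat.zero_mul] at hN
      simp only [Finset.sum_empty]
      rw [zero_pow (by omega : N ≠ 0)]
      exact FractionalIdeal.zero_le _
  | @insert x t' hx ih =>
      intro N hN
      rw [Finset.sum_insert hx, Finset.sum_insert hx]
      rw [Finset.card_insert_of_notMem hx] at hN
      set S₀ := S x with hS₀
      set T := ∑ i ∈ t', S i with hT
      set Tn := ∑ i ∈ t', S i ^ n with hTn
      have hn1N : n - 1 < N :=
        lt_of_le_of_lt (Nat.le_mul_of_pos_left _ (by omega)) hN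
      rw [add_pow]
      apply FI.sum_le'
      intro j hj
      have hjN : j ≤ N := Nat.lt_succ_iff.1 (Finset.mem_range.1 hj)
      have hterm : S₀ ^ j * T ^ (N - j) * ((N.choose j : ℕ) : FractionalIdeal R⁰ K)
          ≤ S₀ ^ j * T ^ (N - j) := by
        calc S₀ ^ j * T ^ (N - j) * ((N.choose j : ℕ) : FractionalIdeal R⁰ K)
            ≤ S₀ ^ j * T ^ (N - j) * 1 := FI.mul_le_mul' le_rfl (FI.natCast_le_one' _)
          _ = S₀ ^ j * T ^ (N - j) := mul_one _
      refine le_trans hterm ?_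
      rcases le_or_gt n j with hnj | hjn
      · have e : S₀ ^ j = S₀ ^ n * S₀ ^ (j - n) := by
          rw [← pow_add]; congr 1; omega
        rw [e, mul_assoc]
        refine le_trans (FI.mul_le_mul' le_rfl ?_)
          (FI.mul_le_mul' (FI.le_add_left' (S₀ ^ n) Tn) le_rfl)
        have h4 : S₀ ^ (j - n) * T ^ (N - j) ≤ (S₀ + T) ^ (j - n) * (S₀ + T) ^ (N - j) :=
          FI.mul_le_mul' (FI.pow_le_pow' (FI.le_add_left' _ _) _)
            (FI.pow_le_pow' (FI.le_add_right' _ _) _)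
        rw [← pow_add] at h4
        rwa [show j - n + (N - j) = N - n from by omega] at h4
      · rcases le_or_gt n (N - j) with hnNj | hNjn
        · have hcard : t'.card * (n - 1) < N - j := by
            have he : t'.card * (n - 1) + (n - 1) = (t'.card + 1) * (n - 1) := by ring
            omega
          have hT2 := ih (N - j) hcard
          refine le_trans (FI.mul_le_mul' le_rfl hT2) ?_
          rw [← mul_assoc, mul_comm (S₀ ^ j) Tn, mul_assoc]
          refine FI.mul_le_mul' (FI.le_add_right' (S₀ ^ n) Tn) ?_
          have h4 : S₀ ^ j * T ^ (N - j - n) ≤ (S₀ + T) ^ j * (S₀ + T) ^ (N - j - n) :=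
            FI.mul_le_mul' (FI.pow_le_pow' (FI.le_add_left' _ _) _)
              (FI.pow_le_pow' (FI.le_add_right' _ _) _)
          rw [← pow_add] at h4
          rwa [show j + (N - j - n) = N - n from by omega] at h4
        · have hc0 : t'.card = 0 := by
            by_contra hc
            have h2 : 2 * (n - 1) ≤ (t'.card + 1) * (n - 1) :=
              Nat.mul_le_mul_right _ (by omega)
            omega
          obtain rfl : t' = ∅ := Finset.card_eq_zero.1 hc0
          have hT0 : T = 0 := Finset.sum_empty
          rw [hT0, zero_pow (by omega : N - j ≠ 0), mul_zero]
          exact FractionalIdeal.zero_le _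

end StarLemmas

/-- For `J = (a₁, …, a_k)` a finitely generated nonzero fractional ideal contained in `I`:
`J` is a `★`-reduction of `I` iff for every positive `n` the ideal `(a₁^n, …, a_k^n)` is a
`★`-reduction of `I^n`. -/
theorem starReduction_iff_pow_generators (R K : Type*) [CommRing R] [IsDomain R] [Field K]
    [Algebra R K] [IsFractionRing R K] (s : StarOperation R K) (k : ℕ) (a : Fin k → K)
    (J I : FractionalIdeal R⁰ K)
    (hJ : J = ∑ i : Fin k, FractionalIdeal.spanSingleton R⁰ (a i))
    (hJ0 : J ≠ 0) (hI0 : I ≠ 0) (hJI : J ≤ I) :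
    IsStarReduction s J I ↔ ∀ n : ℕ, 0 < n →
      IsStarReduction s (∑ i : Fin k, FractionalIdeal.spanSingleton R⁰ (a i ^ n)) (I ^ n) := by
  constructor
  · intro hred n hn
    obtain ⟨m, hm⟩ := hred
    have hk : 0 < k := by
      rcases Nat.eq_zero_or_pos k with rfl | h
      · exact absurd (by rw [hJ]; simp) hJ0
      · exact h
    obtain ⟨i₀, hi₀⟩ : ∃ i, a i ≠ 0 := by
      by_contra hcon; push_neg at hcon
      exact hJ0 (by rw [hJ]; simp [hcon])
    set Jn : FractionalIdeal R⁰ K :=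
      ∑ i : Fin k, FractionalIdeal.spanSingleton R⁰ (a i ^ n) with hJn
    have hJn0 : Jn ≠ 0 := by
      intro h0
      have hle : FractionalIdeal.spanSingleton R⁰ (a i₀ ^ n) ≤ Jn := by
        rw [hJn]
        exact FI.le_sum' Finset.univ
          (fun i => FractionalIdeal.spanSingleton R⁰ (a i ^ n)) (Finset.mem_univ i₀)
      rw [h0] at hle
      exact (FractionalIdeal.spanSingleton_ne_zero_iff.2 (pow_ne_zero n hi₀))
        (le_antisymm hle (FractionalIdeal.zero_le _))
    have hJnJ : Jn ≤ J ^ n := by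
      rw [hJn]
      apply FI.sum_le'
      intro i _
      rw [← FractionalIdeal.spanSingleton_pow]
      have hsi : FractionalIdeal.spanSingleton R⁰ (a i) ≤ J := by
        rw [hJ]
        exact FI.le_sum' Finset.univ
          (fun i => FractionalIdeal.spanSingleton R⁰ (a i)) (Finset.mem_univ i)
      exact FI.pow_le_pow' hsi n
    set N := k * n with hN
    have harith : k * (n - 1) < k * n := by
      have h1 : k * (n - 1) + k = k * n := by
        cases n with
        | zero => omega
        | succ n' => rw [Nat.succ_sub_one, Nat.mul_succ]
      omega
    have hpig : J ^ N ≤ Jn * J ^ (N - n) := by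
      have hcard : (Finset.univ : Finset (Fin k)).card * (n - 1) < N := by
        rw [Finset.card_univ, Fintype.card_fin]; exact harith
      have hp := pow_le_pigeonhole (fun i => FractionalIdeal.spanSingleton R⁰ (a i)) n
        Finset.univ N hcard
      simp only [FractionalIdeal.spanSingleton_pow] at hp
      rwa [← hJ, ← hJn] at hp
    set M := m + N with hM
    refine ⟨M, ?_⟩
    have hIn : ∀ e : ℕ, (I ^ n) ^ e = I ^ (n * e) := fun e => (pow_mul I n e).symm
    rw [hIn M, hIn (M + 1)]
    set P := n * M with hP
    have hPN : n * (M + 1) = P + n := by rw [Nat.mul_succ]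
    rw [hPN]
    have hnN : n ≤ N := Nat.le_mul_of_pos_left n hk
    have hmP1 : m ≤ n * m := Nat.le_mul_of_pos_left m hn
    have hNP1 : N ≤ n * N := Nat.le_mul_of_pos_left N hn
    have hPexp : P = n * m + n * N := by rw [hP, hM, Nat.mul_add]
    have hge : N + m ≤ P + n := by omega
    set d := P + n - (N + m) with hd
    have hNmd : N + (m + d) = P + n := by omega
    have hJI' : ∀ e, J ^ e ≤ I ^ e := fun e => FI.pow_le_pow' hJI e
    have hJnI : Jn ≤ I ^ n := le_trans hJnJ (hJI' n)
    have hne1 : Jn * I ^ P ≠ 0 := FI.mul_ne_zero' hJn0 (FI.pow_ne_zero' hI0 P)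
    apply le_antisymm
    · apply s.star_mono _ _ hne1
      calc Jn * I ^ P ≤ I ^ n * I ^ P := FI.mul_le_mul' hJnI le_rfl
        _ = I ^ (P + n) := by rw [← pow_add, Nat.add_comm]
    · have hkey := star_key s hJ0 hI0 hm (N - 1) d
      rw [show N - 1 + 1 = N from by omega] at hkey
      rw [hNmd] at hkey
      rw [← hkey]
      apply s.star_mono _ _
        (FI.mul_ne_zero' (FI.pow_ne_zero' hJ0 N) (FI.pow_ne_zero' hI0 (m + d)))
      calc J ^ N * I ^ (m + d)
          ≤ (Jn * J ^ (N - n)) * I ^ (m + d) := FI.mul_le_mul' hpig le_rfl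
        _ ≤ (Jn * I ^ (N - n)) * I ^ (m + d) :=
            FI.mul_le_mul' (FI.mul_le_mul' le_rfl (hJI' _)) le_rfl
        _ = Jn * I ^ (N - n + (m + d)) := by rw [mul_assoc, ← pow_add]
        _ = Jn * I ^ P := by rw [show N - n + (m + d) = P from by omega]
  · intro h
    have h1 := h 1 one_pos
    simp only [pow_one] at h1
    rwa [← hJ] at h1
end

section
/- Let R be a domain, I a nonzero ideal of R, and x ∈ R such that I is a t-reduction of (I, x). Then there exists a finitely generated ideal F ⊆ I such that F is a t-reduction of (F, x). -/
open scoped nonZeroDivisors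

/-- The `v`-operation (divisorial closure) on `R`-submodules of the fraction field `K`:
`I_v = (I⁻¹)⁻¹` where `I⁻¹ = (R : I) = 1 / I`. -/
noncomputable def vS (R K : Type*) [CommRing R] [Field K] [Algebra R K]
    (I : Submodule R K) : Submodule R K := 1 / (1 / I)

/-- The `t`-operation: `I_t = ⋃ J_v` where `J` ranges over nonzero finitely generated
sub-ideals of `I`. -/
noncomputable def tS (R K : Type*) [CommRing R] [Field K] [Algebra R K]
    (I : Submodule R K) : Submodule R K :=
  ⨆ J ∈ {J : Submodule R K | J ≠ ⊥ ∧ J.FG ∧ J ≤ I}, vS R K J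

/-- The image of an ideal of `R` in the fraction field `K`, as an `R`-submodule. -/
noncomputable def idealToSub (R K : Type*) [CommRing R] [Field K] [Algebra R K]
    (I : Ideal R) : Submodule R K := Submodule.map (Algebra.linearMap R K) I

/-- The `t`-closure of an ideal of `R`, computed in the fraction field `K`. -/
noncomputable def tI (R K : Type*) [CommRing R] [Field K] [Algebra R K]
    (I : Ideal R) : Submodule R K := tS R K (idealToSub R K I)

/-- The `v`-closure of an ideal of `R`, computed in the fraction field `K`. -/
noncomputable def vI (R K : Type*) [CommRing R] [Field K] [Algebra R K]
    (I : Ideal R) : Submodule R K := vS R K (idealToSub R K I)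

section Aux

variable (R K : Type*) [CommRing R] [Field K] [Algebra R K]

lemma le_vS (N : Submodule R K) : N ≤ vS R K N := by
  intro y hy
  rw [vS, Submodule.mem_div_iff_forall_mul_mem]
  intro z hz
  rw [Submodule.mem_div_iff_forall_mul_mem] at hz
  simpa [mul_comm] using hz y hy

lemma one_div_antitone {M N : Submodule R K} (h : M ≤ N) : 1 / N ≤ 1 / M := by
  intro z hz
  rw [Submodule.mem_div_iff_forall_mul_mem] at hz ⊢
  exact fun b hb => hz b (h hb)

lemma vS_mono {M N : Submodule R K} (h : M ≤ N) : vS R K M ≤ vS R K N :=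
  one_div_antitone R K (one_div_antitone R K h)

lemma vS_idem (N : Submodule R K) : vS R K (vS R K N) = vS R K N := by
  apply le_antisymm
  · exact one_div_antitone R K (le_vS R K (1 / N))
  · exact le_vS R K _

lemma vS_le_tS {J N : Submodule R K} (h0 : J ≠ ⊥) (hfg : J.FG) (hle : J ≤ N) :
    vS R K J ≤ tS R K N := by
  rw [tS]
  exact le_biSup _ ⟨h0, hfg, hle⟩

lemma le_tS (N : Submodule R K) : N ≤ tS R K N := by
  intro y hy
  by_cases hy0 : y = 0
  · simp [hy0]
  · have h1 : y ∈ Submodule.span R {y} := Submodule.mem_span_singleton_self y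
    have h2 : Submodule.span R {y} ≠ ⊥ := by
      simpa [Submodule.span_singleton_eq_bot] using hy0
    have h3 : Submodule.span R {y} ≤ N := by
      rwa [Submodule.span_singleton_le_iff_mem]
    exact vS_le_tS R K h2 (Submodule.fg_span_singleton y) h3 (le_vS R K _ h1)

lemma tS_mono {M N : Submodule R K} (h : M ≤ N) : tS R K M ≤ tS R K N := by
  rw [tS]
  refine iSup₂_le fun J hJ => ?_
  exact vS_le_tS R K hJ.1 hJ.2.1 (hJ.2.2.trans h)

lemma mem_tS_exists {N : Submodule R K} (hN : N ≠ ⊥) {y : K} (hy : y ∈ tS R K N) :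
    ∃ J : Submodule R K, J ≠ ⊥ ∧ J.FG ∧ J ≤ N ∧ y ∈ vS R K J := by
  obtain ⟨z, hzN, hz0⟩ := Submodule.exists_mem_ne_zero_of_ne_bot hN
  have hz : Submodule.span R {z} ≠ ⊥ := by
    simpa [Submodule.span_singleton_eq_bot] using hz0
  have hzle : Submodule.span R {z} ≤ N := by rwa [Submodule.span_singleton_le_iff_mem]
  haveI hne : Nonempty {J : Submodule R K // J ≠ ⊥ ∧ J.FG ∧ J ≤ N} :=
    ⟨⟨Submodule.span R {z}, hz, Submodule.fg_span_singleton z, hzle⟩⟩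
  have hdir : Directed (· ≤ ·)
      (fun J : {J : Submodule R K // J ≠ ⊥ ∧ J.FG ∧ J ≤ N} => vS R K J.1) := by
    rintro ⟨J1, h1, fg1, le1⟩ ⟨J2, h2, fg2, le2⟩
    refine ⟨⟨J1 ⊔ J2, ?_, fg1.sup fg2, sup_le le1 le2⟩, ?_, ?_⟩
    · intro hb
      exact h1 (le_bot_iff.mp (le_sup_left.trans hb.le))
    · exact vS_mono R K le_sup_left
    · exact vS_mono R K le_sup_right
  rw [tS, iSup_subtype'] at hy
  obtain ⟨⟨J, hJ0, hJfg, hJle⟩, hyJ⟩ := (Submodule.mem_iSup_of_directed _ hdir).mp hy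
  exact ⟨J, hJ0, hJfg, hJle, hyJ⟩

lemma tS_le_of_le {M N : Submodule R K} (h : M ≤ tS R K N) : tS R K M ≤ tS R K N := by
  classical
  by_cases hN : N = ⊥
  · subst hN
    have htb : tS R K (⊥ : Submodule R K) = ⊥ := by
      rw [tS]
      exact le_antisymm (iSup₂_le fun J hJ => absurd (le_bot_iff.mp hJ.2.2) hJ.1) bot_le
    rw [htb] at h ⊢
    have hM : M = ⊥ := le_bot_iff.mp h
    subst hM
    rw [tS]
    exact iSup₂_le fun J hJ => absurd (le_bot_iff.mp hJ.2.2) hJ.1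
  · rw [tS]
    refine iSup₂_le fun J hJ => ?_
    obtain ⟨hJ0, hJfg, hJle⟩ := hJ
    obtain ⟨T, hT⟩ := hJfg
    have key : ∀ s : Finset K, (↑s : Set K) ⊆ (tS R K N : Set K) →
        ∃ C : Submodule R K, C ≠ ⊥ ∧ C.FG ∧ C ≤ N ∧ (↑s : Set K) ⊆ (vS R K C : Set K) := by
      intro s
      induction s using Finset.induction_on with
      | empty =>
        intro _
        obtain ⟨z, hzN, hz0⟩ := Submodule.exists_mem_ne_zero_of_ne_bot hN
        refine ⟨Submodule.span R {z}, ?_, Submodule.fg_span_singleton z, ?_, by simp⟩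
        · simpa [Submodule.span_singleton_eq_bot] using hz0
        · rwa [Submodule.span_singleton_le_iff_mem]
      | insert t s' hnot ih =>
        intro hsub
        have ht : t ∈ tS R K N := hsub (by simp)
        have hs' : (↑s' : Set K) ⊆ (tS R K N : Set K) := fun u hu => hsub (by simp [hu])
        obtain ⟨C1, hC10, hC1fg, hC1le, hC1t⟩ := mem_tS_exists R K hN ht
        obtain ⟨C2, hC20, hC2fg, hC2le, hC2s⟩ := ih hs'
        refine ⟨C1 ⊔ C2, ?_, hC1fg.sup hC2fg, sup_le hC1le hC2le, ?_⟩
        · intro hb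
          exact hC10 (le_bot_iff.mp (le_sup_left.trans hb.le))
        · intro u hu
          rcases Finset.mem_insert.mp hu with rfl | hu'
          · exact vS_mono R K le_sup_left hC1t
          · exact vS_mono R K le_sup_right (hC2s hu')
    have hTsub : (↑T : Set K) ⊆ (tS R K N : Set K) := fun u hu =>
      h (hJle (hT ▸ Submodule.subset_span hu))
    obtain ⟨C, hC0, hCfg, hCle, hTC⟩ := key T hTsub
    have hJC : J ≤ vS R K C := by
      rw [← hT]
      exact Submodule.span_le.mpr hTC
    calc vS R K J ≤ vS R K (vS R K C) := vS_mono R K hJC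
      _ = vS R K C := vS_idem R K C
      _ ≤ tS R K N := vS_le_tS R K hC0 hCfg hCle

end Aux

section IdealAux

variable {R : Type*} [CommRing R]

private lemma sup_pow_mono {F F' : Ideal R} (X : Ideal R) (h : F ≤ F') (n : ℕ) :
    (F ⊔ X) ^ n ≤ (F' ⊔ X) ^ n :=
  Ideal.pow_right_mono (sup_le_sup_right h X) n

lemma exists_fg_pow_mem (I : Ideal R) (x : R) :
    ∀ n : ℕ, ∀ b ∈ (I + Ideal.span {x}) ^ n,
      ∃ F : Ideal R, F.FG ∧ F ≤ I ∧ b ∈ (F + Ideal.span {x}) ^ n := by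
  intro n
  induction n with
  | zero =>
    intro b hb
    exact ⟨⊥, Submodule.fg_bot, bot_le, by simpa using hb⟩
  | succ n ih =>
    intro b hb
    rw [pow_succ] at hb
    refine Submodule.mul_induction_on hb ?_ ?_
    · intro c hc a ha
      obtain ⟨F, hFfg, hFle, hcF⟩ := ih c hc
      rw [Ideal.add_eq_sup] at ha
      obtain ⟨i, hi, x', hx', rfl⟩ := Submodule.mem_sup.mp ha
      refine ⟨F + Ideal.span {i}, Submodule.FG.sup hFfg (Submodule.fg_span_singleton i), ?_, ?_⟩
      · exact sup_le hFle ((Ideal.span_singleton_le_iff_mem I).mpr hi)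
      · rw [pow_succ]
        refine Submodule.mul_mem_mul ?_ ?_
        · simp only [Ideal.add_eq_sup] at hcF ⊢
          exact sup_pow_mono _ le_sup_left n hcF
        · rw [Ideal.add_eq_sup]
          refine Submodule.add_mem _ ?_ ?_
          · exact Submodule.mem_sup_left (Submodule.mem_sup_right
              (Ideal.mem_span_singleton_self i))
          · exact Submodule.mem_sup_right hx'
    · rintro c d ⟨F1, h1fg, h1le, hc⟩ ⟨F2, h2fg, h2le, hd⟩
      refine ⟨F1 + F2, Submodule.FG.sup h1fg h2fg, sup_le h1le h2le, Submodule.add_mem _ ?_ ?_⟩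
      · simp only [Ideal.add_eq_sup] at hc ⊢
        exact sup_pow_mono _ le_sup_left (n+1) hc
      · simp only [Ideal.add_eq_sup] at hd ⊢
        exact sup_pow_mono _ le_sup_right (n+1) hd

lemma exists_fg_mul_pow_mem (I : Ideal R) (x : R) (n : ℕ) :
    ∀ r ∈ I * (I + Ideal.span {x}) ^ n,
      ∃ F : Ideal R, F.FG ∧ F ≤ I ∧ r ∈ F * (F + Ideal.span {x}) ^ n := by
  intro r hr
  refine Submodule.mul_induction_on hr ?_ ?_
  · intro a ha c hc
    obtain ⟨F, hFfg, hFle, hcF⟩ := exists_fg_pow_mem I x n c hc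
    refine ⟨F + Ideal.span {a}, Submodule.FG.sup hFfg (Submodule.fg_span_singleton a), ?_, ?_⟩
    · exact sup_le hFle ((Ideal.span_singleton_le_iff_mem I).mpr ha)
    · refine Submodule.mul_mem_mul (Submodule.mem_sup_right
        (Ideal.mem_span_singleton_self a)) ?_
      simp only [Ideal.add_eq_sup] at hcF ⊢
      exact sup_pow_mono _ le_sup_left n hcF
  · rintro c d ⟨F1, h1fg, h1le, hc⟩ ⟨F2, h2fg, h2le, hd⟩
    have hmono : ∀ F F' : Ideal R, F ≤ F' →
        F * (F + Ideal.span {x}) ^ n ≤ F' * (F' + Ideal.span {x}) ^ n := by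
      intro F F' hFF
      simp only [Ideal.add_eq_sup]
      exact mul_le_mul' hFF (sup_pow_mono _ hFF n)
    refine ⟨F1 + F2, Submodule.FG.sup h1fg h2fg, sup_le h1le h2le, Submodule.add_mem _ ?_ ?_⟩
    · exact hmono F1 (F1 + F2) le_sup_left hc
    · exact hmono F2 (F1 + F2) le_sup_right hd

lemma pow_succ_le_mul_add (F : Ideal R) (x : R) :
    ∀ n : ℕ, (F + Ideal.span {x}) ^ (n + 1) ≤
      F * (F + Ideal.span {x}) ^ n + Ideal.span {x} ^ (n + 1) := by
  intro n
  set X := Ideal.span ({x} : Set R) with hX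
  induction n with
  | zero =>
    show (F + X) ^ 1 ≤ F * (F + X) ^ 0 + X ^ 1
    rw [pow_one, pow_zero, mul_one, pow_one]
  | succ n ih =>
    have hXle : X ≤ F + X := by
      rw [Ideal.add_eq_sup]; exact le_sup_right
    have h1 : X ^ (n + 1) * F ≤ F * (F + X) ^ (n + 1) := by
      rw [mul_comm]
      exact mul_le_mul' le_rfl (Ideal.pow_right_mono hXle _)
    calc (F + X) ^ (n + 2)
        = (F + X) ^ (n + 1) * (F + X) := pow_succ _ _
      _ ≤ (F * (F + X) ^ n + X ^ (n + 1)) * (F + X) := mul_le_mul' ih le_rfl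
      _ = F * (F + X) ^ (n + 1) + (X ^ (n + 1) * F + X ^ (n + 2)) := by ring
      _ ≤ F * (F + X) ^ (n + 1) + X ^ (n + 2) :=
          sup_le le_sup_left (sup_le (h1.trans le_sup_left) le_sup_right)

end IdealAux

/-- If `I` is a nonzero ideal of `R` and `x ∈ R` is such that `I` is a `t`-reduction of
`(I, x)`, then there is a finitely generated ideal `F ⊆ I` such that `F` is a `t`-reduction
of `(F, x)`. -/
theorem exists_fg_t_reduction (R K : Type*) [CommRing R] [IsDomain R]
    [Field K] [Algebra R K] [IsFractionRing R K]
    (I : Ideal R) (hI0 : I ≠ 0) (x : R)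
    (h : ∃ n : ℕ, tI R K (I * (I + Ideal.span {x}) ^ n)
      = tI R K ((I + Ideal.span {x}) ^ (n + 1))) :
    ∃ F : Ideal R, F.FG ∧ F ≤ I ∧
      ∃ n : ℕ, tI R K (F * (F + Ideal.span {x}) ^ n)
        = tI R K ((F + Ideal.span {x}) ^ (n + 1)) := by
  classical
  obtain ⟨n, hn⟩ := h
  set X := Ideal.span ({x} : Set R) with hXdef
  set A := I + X with hAdef
  -- the key element x^(n+1)
  have hXA : X ≤ A := by
    rw [hAdef, Ideal.add_eq_sup]; exact le_sup_right
  have hIA : I ≤ A := by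
    rw [hAdef, Ideal.add_eq_sup]; exact le_sup_left
  have hxA : x ^ (n + 1) ∈ A ^ (n + 1) := by
    refine Ideal.pow_right_mono hXA (n + 1) ?_
    rw [hXdef, Ideal.span_singleton_pow]
    exact Ideal.mem_span_singleton_self _
  set y : K := algebraMap R K (x ^ (n + 1)) with hydef
  have hy1 : y ∈ idealToSub R K (A ^ (n + 1)) := ⟨x ^ (n + 1), hxA, rfl⟩
  have hy2 : y ∈ tI R K (I * A ^ n) := by
    rw [hn]
    exact le_tS R K _ hy1
  -- the ideal I * A ^ n is nonzero
  obtain ⟨a, haI, ha0⟩ := Submodule.exists_mem_ne_zero_of_ne_bot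
    (by rwa [Ne, ← Ideal.zero_eq_bot] : I ≠ ⊥)
  have haIA : a ^ (n + 1) ∈ I * A ^ n := by
    have : a ^ (n + 1) = a * a ^ n := by ring
    rw [this]
    refine Submodule.mul_mem_mul haI (Ideal.pow_right_mono hIA n ?_)
    refine Ideal.pow_right_mono ((Ideal.span_singleton_le_iff_mem I).mpr haI) n ?_
    rw [Ideal.span_singleton_pow]
    exact Ideal.mem_span_singleton_self _
  have hinj : Function.Injective (algebraMap R K) := IsFractionRing.injective R K
  have hNne : idealToSub R K (I * A ^ n) ≠ ⊥ := by
    intro hb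
    have hmem : algebraMap R K (a ^ (n + 1)) ∈ idealToSub R K (I * A ^ n) :=
      ⟨a ^ (n + 1), haIA, rfl⟩
    rw [hb, Submodule.mem_bot] at hmem
    exact pow_ne_zero (n + 1) ha0 (hinj (by simpa using hmem))
  -- extract a finitely generated nonzero J with y ∈ vS J
  obtain ⟨J, hJ0, hJfg, hJle, hyJ⟩ := mem_tS_exists R K hNne hy2
  obtain ⟨T, hT⟩ := hJfg
  -- find a single finitely generated F ≤ I capturing all of T
  have key : ∀ s : Finset K, (↑s : Set K) ⊆ (idealToSub R K (I * A ^ n) : Set K) →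
      ∃ F : Ideal R, F.FG ∧ F ≤ I ∧
        (↑s : Set K) ⊆ (idealToSub R K (F * (F + X) ^ n) : Set K) := by
    intro s
    induction s using Finset.induction_on with
    | empty => exact fun _ => ⟨⊥, Submodule.fg_bot, bot_le, by simp⟩
    | insert t s' hnot ih =>
      intro hsub
      have ht : t ∈ idealToSub R K (I * A ^ n) := hsub (by simp)
      obtain ⟨r, hr, hrt⟩ := ht
      obtain ⟨F1, h1fg, h1le, hrF1⟩ := exists_fg_mul_pow_mem I x n r hr
      obtain ⟨F2, h2fg, h2le, hs'F2⟩ := ih (fun u hu => hsub (by simp [hu]))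
      have hmono : ∀ F F' : Ideal R, F ≤ F' →
          F * (F + X) ^ n ≤ F' * (F' + X) ^ n := by
        intro F F' hFF
        simp only [Ideal.add_eq_sup]
        exact mul_le_mul' hFF (Ideal.pow_right_mono (sup_le_sup_right hFF X) n)
      refine ⟨F1 + F2, Submodule.FG.sup h1fg h2fg, sup_le h1le h2le, ?_⟩
      intro u hu
      rcases Finset.mem_insert.mp hu with rfl | hu'
      · exact ⟨r, hmono F1 (F1 + F2) le_sup_left hrF1, hrt⟩
      · exact Submodule.map_mono (hmono F2 (F1 + F2) le_sup_right) (hs'F2 hu')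
  have hTsub : (↑T : Set K) ⊆ (idealToSub R K (I * A ^ n) : Set K) := fun u hu =>
    hJle (hT ▸ Submodule.subset_span hu)
  obtain ⟨F, hFfg, hFle, hTF⟩ := key T hTsub
  refine ⟨F, hFfg, hFle, n, ?_⟩
  -- J lies inside the image of F * (F + X)^n
  have hJF : J ≤ idealToSub R K (F * (F + X) ^ n) := by
    rw [← hT]
    exact Submodule.span_le.mpr hTF
  have hyB : y ∈ tS R K (idealToSub R K (F * (F + X) ^ n)) :=
    vS_le_tS R K hJ0 ⟨T, hT⟩ hJF hyJ
  -- the key inclusion at the submodule level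
  have hincl : idealToSub R K ((F + X) ^ (n + 1)) ≤
      tS R K (idealToSub R K (F * (F + X) ^ n)) := by
    have h1 : (F + X) ^ (n + 1) ≤ F * (F + X) ^ n + X ^ (n + 1) :=
      pow_succ_le_mul_add F x n
    have h2 : idealToSub R K ((F + X) ^ (n + 1)) ≤
        idealToSub R K (F * (F + X) ^ n) ⊔ idealToSub R K (X ^ (n + 1)) := by
      refine (Submodule.map_mono h1).trans ?_
      rw [idealToSub, Ideal.add_eq_sup, Submodule.map_sup]
      exact le_rfl
    refine h2.trans (sup_le ?_ ?_)
    · exact le_tS R K _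
    · have hXpow : (X : Ideal R) ^ (n + 1) = Ideal.span {x ^ (n + 1)} := by
        rw [hXdef, Ideal.span_singleton_pow]
      have : idealToSub R K (X ^ (n + 1)) = Submodule.span R {y} := by
        rw [hXpow, idealToSub, Ideal.span, Submodule.map_span]
        simp [hydef]
      rw [this, Submodule.span_singleton_le_iff_mem]
      exact hyB
  -- conclude
  apply le_antisymm
  · -- t(F * (F+X)^n) ≤ t((F+X)^(n+1))
    apply tS_mono
    apply Submodule.map_mono
    calc F * (F + X) ^ n ≤ (F + X) * (F + X) ^ n := by
          refine mul_le_mul' ?_ le_rfl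
          rw [Ideal.add_eq_sup]; exact le_sup_left
      _ = (F + X) ^ (n + 1) := by rw [← pow_succ']
  · exact tS_le_of_le R K hincl
end
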